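/- Let X be a topological space equipped with cell data (P, ε, σ ↦ U_σ) satisfying (P1) and (P2). Then the following are equivalent: (a) for every sheaf of abelian groups F on X, the map Γ(X, F) → Č⁰_P(F) sending a global section s to the family (s|_{U_σ})_{|σ|=0} is injective with image exactly ker(d⁰), i.e. it induces an isomorphism Γ(X, F) ≅ Ȟ⁰_P(F); (b) for every x ∈ X and every abelian group A, the homomorphism A → K⁰(P_x, A) sending a to the constant family is injective with image exactly ker(d⁰ : K⁰(P_x, A) → K¹(P_x, A)). (This is Lemma 3.6 of the paper: condition (b) is the precise cochain-level form of the paper's condition (P3): H⁰(P_x, ℤ) = ℤ.) -/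

import Mathlib

open CategoryTheory TopologicalSpace Opposite Function

universe u

/-- Cell data on a topological space `X`: a type of cells with a partial order and
dimension function, an incidence function satisfying the axioms of an incidence function
on a cell complex, and an order-reversing assignment of open sets covering `X`
(conditions (P1) and (P2)). -/
structure CellData (X : Type u) [TopologicalSpace X] : Type (u + 1) where
  /-- the type of cells -/
  P : Type u
  /-- the partial order on cells -/
  [po : PartialOrder P]
  /-- the dimension of each cell -/
  dim : P → ℕ
  /-- the incidence function -/
  eps : P → P → ℤ
  /-- axiom (i): for fixed `σ'` only finitely many `σ` have `eps σ σ' ≠ 0` -/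
  eps_finite : ∀ σ' : P, {σ : P | eps σ σ' ≠ 0}.Finite
  /-- axiom (ii): `eps σ σ' = 0` unless `σ < σ'` and `dim σ' = dim σ + 1` -/
  eps_eq_zero : ∀ σ σ' : P, ¬(σ < σ' ∧ dim σ' = dim σ + 1) → eps σ σ' = 0
  /-- axiom (iii) -/
  eps_comp : ∀ σ σ'' : P, dim σ'' = dim σ + 2 →
    (∑ᶠ σ' : P, eps σ σ' * eps σ' σ'') = 0
  /-- the open set attached to each cell -/
  U : P → Opens X
  /-- condition (P1): the assignment is order reversing -/
  mono : ∀ {σ σ' : P}, σ ≤ σ' → U σ' ≤ U σ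
  /-- condition (P2): the open sets cover `X` -/
  covers : ∀ x : X, ∃ σ : P, x ∈ U σ

attribute [instance] CellData.po

namespace CellData

variable {X : TopCat.{u}} (D : CellData ↥X)

/-- The cells of dimension `i`. -/
abbrev Cells (i : ℕ) : Type u := {σ : D.P // D.dim σ = i}

variable (F : TopCat.Presheaf Ab.{u} X)

/-- The `i`-th term of the reduced Čech complex of the presheaf `F`:
the product of the sections of `F` over the `U σ` for `σ` of dimension `i`. -/
abbrev cochain (i : ℕ) : Type u := ∀ σ : D.Cells i, ↥(F.obj (op (D.U σ.1)))

open scoped Classical in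
/-- For a pair of cells, `eps σ σ'` times the restriction map from `U σ` to `U σ'`
(interpreted as `0` unless `σ ≤ σ'`). -/
noncomputable def pairMap (σ σ' : D.P) :
    ↥(F.obj (op (D.U σ))) →+ ↥(F.obj (op (D.U σ'))) :=
  D.eps σ σ' • (if h : σ ≤ σ' then ((F.map (homOfLE (D.mono h)).op).hom : _ →+ _) else 0)

lemma support_pairMap_finite {i : ℕ} (σ' : D.Cells (i + 1)) (f : D.cochain F i) :
    (Function.support fun σ : D.Cells i => D.pairMap F σ.1 σ'.1 (f σ)).Finite := by
  apply Set.Finite.subset ((D.eps_finite σ'.1).preimage (Set.injOn_of_injective Subtype.val_injective))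
  intro σ hσ
  simp only [Function.mem_support] at hσ
  simp only [Set.mem_preimage, Set.mem_setOf_eq]
  intro hz
  apply hσ
  simp [pairMap, hz]

/-- The differential of the reduced Čech complex. -/
noncomputable def cechDiff (i : ℕ) : D.cochain F i →+ D.cochain F (i + 1) :=
  AddMonoidHom.mk'
    (fun f σ' => ∑ᶠ σ : D.Cells i, D.pairMap F σ.1 σ'.1 (f σ))
    (by
      intro f g
      funext σ'
      have : ∀ σ : D.Cells i, D.pairMap F σ.1 σ'.1 ((f + g) σ)
          = D.pairMap F σ.1 σ'.1 (f σ) + D.pairMap F σ.1 σ'.1 (g σ) := by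
        intro σ
        rw [Pi.add_apply, map_add]
      show (∑ᶠ σ : D.Cells i, D.pairMap F σ.1 σ'.1 ((f + g) σ)) = _
      rw [finsum_congr this,
        finsum_add_distrib (D.support_pairMap_finite F σ' f) (D.support_pairMap_finite F σ' g)]
      rfl)

/-- The cocycles of the reduced Čech complex. -/
noncomputable def cechCocycles (i : ℕ) : AddSubgroup (D.cochain F i) :=
  (D.cechDiff F i).ker

/-- The coboundaries of the reduced Čech complex. -/
noncomputable def cechCoboundaries : (i : ℕ) → AddSubgroup (D.cochain F i)
  | 0 => ⊥
  | (j + 1) => (D.cechDiff F j).range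

/-- The `i`-th reduced Čech cohomology group `Ȟ^i_P(F)`. -/
noncomputable def reducedCechCohomology (i : ℕ) : Type u :=
  ↥(D.cechCocycles F i) ⧸
    ((D.cechCoboundaries F i).addSubgroupOf (D.cechCocycles F i))

noncomputable instance (i : ℕ) : AddCommGroup (D.reducedCechCohomology F i) :=
  QuotientAddGroup.Quotient.addCommGroup _

end CellData

namespace CellData

variable {X : TopCat.{u}} (D : CellData ↥X)

/-- For `x : X`, the cells `σ` of dimension `i` with `x ∈ U σ` (the `i`-cells of `P ₓ`). -/
abbrev KCells (x : ↥X) (i : ℕ) : Type u := {σ : D.P // x ∈ D.U σ ∧ D.dim σ = i}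

/-- The `i`-th term of the complex `K^•(Pₓ, A)`. -/
abbrev KCochain (x : ↥X) (A : Type u) [AddCommGroup A] (i : ℕ) : Type u :=
  D.KCells x i → A

/-- The differential of the complex `K^•(Pₓ, A)`. -/
noncomputable def KDiffFun (x : ↥X) (A : Type u) [AddCommGroup A] (i : ℕ)
    (f : D.KCochain x A i) : D.KCochain x A (i + 1) :=
  fun σ' => ∑ᶠ σ : D.KCells x i, D.eps σ.1 σ'.1 • f σ

/-- Condition (P3'): for every point `x` and every abelian group `A`, the map sending
`a : A` to the constant family in `K⁰(Pₓ, A)` is injective with image exactly the kernel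
of the differential `K⁰(Pₓ, A) → K¹(Pₓ, A)`. -/
def CondP3 : Prop :=
  ∀ (x : ↥X) (A : Type u) [AddCommGroup A],
    Function.Injective (fun (a : A) (_ : D.KCells x 0) => a) ∧
      Set.range (fun (a : A) (_ : D.KCells x 0) => a) =
        {f : D.KCochain x A 0 | D.KDiffFun x A 0 f = 0}

/-- Condition (P4'): for every point `x`, every abelian group `A` and every `i ≥ 1`, the
cohomology of the complex `K^•(Pₓ, A)` in degree `i` vanishes; i.e., every cocycle in
degree `i = j + 1` is a coboundary. -/
def CondP4 : Prop :=
  ∀ (x : ↥X) (A : Type u) [AddCommGroup A] (j : ℕ)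
    (f : D.KCochain x A (j + 1)), D.KDiffFun x A (j + 1) f = 0 →
      ∃ g : D.KCochain x A j, D.KDiffFun x A j g = f

end CellData


noncomputable section AuxProof

open CategoryTheory.Limits

lemma auxSubsingleton {G : Ab.{u}} (h : CategoryTheory.Limits.IsZero G) : Subsingleton ↥G := by
  have i : G ≅ AddCommGrpCat.of PUnit := h.iso (AddCommGrpCat.isZero_of_subsingleton _)
  haveI : Subsingleton ((forget Ab).obj (AddCommGrpCat.of PUnit.{u + 1})) :=
    inferInstanceAs (Subsingleton PUnit.{u+1})
  exact Equiv.subsingleton (((forget Ab).mapIso i).toEquiv)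

lemma auxReindex {α : Type*} {M : Type*} [AddCommMonoid M] (p q : α → Prop)
    (h : α → M) (hz : ∀ a, p a → ¬ q a → h a = 0) (himp : ∀ a, q a → p a) :
    ∑ᶠ a : Subtype p, h a.1 = ∑ᶠ a : Subtype q, h a.1 := by
  rw [finsum_subtype_eq_finsum_cond, finsum_subtype_eq_finsum_cond]
  apply finsum_mem_inter_support_eq
  ext a
  show (p a ∧ h a ≠ 0) ↔ (q a ∧ h a ≠ 0)
  constructor
  · rintro ⟨h1, h2⟩; exact ⟨by_contra fun hq => h2 (hz a h1 hq), h2⟩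
  · rintro ⟨h1, h2⟩; exact ⟨himp a h1, h2⟩

lemma auxFinsumZsmul {ι : Type*} {M : Type*} [AddCommGroup M] {g : ι → ℤ}
    (hg : (Function.support g).Finite) (c : M) :
    ∑ᶠ i, g i • c = (∑ᶠ i, g i) • c := by
  have := AddMonoidHom.map_finsum (zmultiplesHom M c) hg
  simpa [zmultiplesHom_apply] using this.symm

namespace CellData

variable {X : TopCat.{u}} (D : CellData ↥X)

lemma auxPairMapApplyOfLe (F : TopCat.Presheaf Ab.{u} X) {σ σ' : D.P} (h : σ ≤ σ')
    (a : ↥(F.obj (op (D.U σ)))) :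
    D.pairMap F σ σ' a = D.eps σ σ' • (F.map (homOfLE (D.mono h)).op a) := by
  rw [pairMap, dif_pos h]
  rfl

lemma auxEpsZero {σ σ' : D.P} (h : ¬ σ ≤ σ') : D.eps σ σ' = 0 :=
  D.eps_eq_zero σ σ' (fun hc => h hc.1.le)

lemma auxPairMapApplyOfNotLe (F : TopCat.Presheaf Ab.{u} X) {σ σ' : D.P} (h : ¬ σ ≤ σ')
    (a : ↥(F.obj (op (D.U σ)))) :
    D.pairMap F σ σ' a = 0 := by
  rw [pairMap, dif_neg h, D.auxEpsZero h]
  simp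

lemma auxPairMapZeroOfNotMem (F : TopCat.Presheaf Ab.{u} X) {x : ↥X} {σ σ' : D.P}
    (hσ' : x ∈ D.U σ') (hσ : x ∉ D.U σ) (a : ↥(F.obj (op (D.U σ)))) :
    D.pairMap F σ σ' a = 0 := by
  have heps : D.eps σ σ' = 0 := by
    apply D.eps_eq_zero
    rintro ⟨hlt, -⟩
    exact hσ (D.mono hlt.le hσ')
  rw [pairMap, heps]
  simp

/-- evaluating the Čech differential along a compatible family of "evaluation" maps. -/
lemma auxEvalCechDiff (F : TopCat.Presheaf Ab.{u} X) {B : Type u} [AddCommGroup B] (x : ↥X)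
    (φ : ∀ (U : Opens ↥X), x ∈ U → (↥(F.obj (op U)) →+ B))
    (hφ : ∀ {U V : Opens ↥X} (h : V ≤ U) (hV : x ∈ V) (a : ↥(F.obj (op U))),
      φ V hV (F.map (homOfLE h).op a) = φ U (h hV) a)
    {i : ℕ} (f : D.cochain F i) (σ' : D.KCells x (i + 1)) :
    φ (D.U σ'.1) σ'.2.1 (D.cechDiff F i f ⟨σ'.1, σ'.2.2⟩) =
      ∑ᶠ σ : D.KCells x i, D.eps σ.1 σ'.1 • φ (D.U σ.1) σ.2.1 (f ⟨σ.1, σ.2.2⟩) := by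
  have h1 : D.cechDiff F i f ⟨σ'.1, σ'.2.2⟩ = ∑ᶠ σ : D.Cells i, D.pairMap F σ.1 σ'.1 (f σ) :=
    rfl
  rw [h1, AddMonoidHom.map_finsum _ (D.support_pairMap_finite F ⟨σ'.1, σ'.2.2⟩ f)]
  set h : D.P → B := fun σ =>
    if hσ : D.dim σ = i then φ (D.U σ'.1) σ'.2.1 (D.pairMap F σ σ'.1 (f ⟨σ, hσ⟩)) else 0 with hh
  have e1 : ∑ᶠ σ : D.Cells i, φ (D.U σ'.1) σ'.2.1 (D.pairMap F σ.1 σ'.1 (f σ)) =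
      ∑ᶠ σ : D.Cells i, h σ.1 := by
    apply finsum_congr
    intro σ
    rw [hh]
    simp only [σ.2, dif_pos]
  rw [e1]
  have e2 : ∑ᶠ σ : D.Cells i, h σ.1 = ∑ᶠ σ : D.KCells x i, h σ.1 := by
    apply auxReindex
    · intro σ hσ hq
      have hx : x ∉ D.U σ := fun hmem => hq ⟨hmem, hσ⟩
      rw [hh]
      simp only [hσ, dif_pos]
      rw [D.auxPairMapZeroOfNotMem F σ'.2.1 hx, map_zero]
    · exact fun σ hσ => hσ.2
  rw [e2]
  apply finsum_congr
  intro σ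
  rw [hh]
  simp only [σ.2.2, dif_pos]
  by_cases hle : σ.1 ≤ σ'.1
  · rw [D.auxPairMapApplyOfLe F hle, map_zsmul,
      hφ (D.mono hle) σ'.2.1 (f ⟨σ.1, σ.2.2⟩)]
  · rw [D.auxPairMapApplyOfNotLe F hle, map_zero, D.auxEpsZero hle]
    simp

end CellData

end AuxProof


noncomputable section SkyAux

open CategoryTheory.Limits

variable {X : TopCat.{u}} (x : ↥X) (A₀ : Ab.{u}) [∀ U : Opens ↥X, Decidable (x ∈ U)]

def skyE {U : Opens ↥X} (h : x ∈ U) : (skyscraperPresheaf x A₀).obj (op U) ⟶ A₀ :=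
  eqToHom (by simp only [skyscraperPresheaf_obj, unop_op, if_pos h])

def skyE' {U : Opens ↥X} (h : x ∈ U) : A₀ ⟶ (skyscraperPresheaf x A₀).obj (op U) :=
  eqToHom (by simp only [skyscraperPresheaf_obj, unop_op, if_pos h])

lemma skyE_skyE' {U : Opens ↥X} (h : x ∈ U) (a : ↥A₀) :
    skyE x A₀ h (skyE' x A₀ h a) = a := by
  rw [← CategoryTheory.comp_apply, skyE, skyE', eqToHom_trans, eqToHom_refl, id_apply]

lemma skyE'_skyE {U : Opens ↥X} (h : x ∈ U) (a) :
    skyE' x A₀ h (skyE x A₀ h a) = a := by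
  rw [← CategoryTheory.comp_apply, skyE, skyE', eqToHom_trans, eqToHom_refl, id_apply]

lemma skyE_res {U V : Opens ↥X} (hle : V ≤ U) (hV : x ∈ V)
    (a : ↥((skyscraperPresheaf x A₀).obj (op U))) :
    skyE x A₀ hV ((skyscraperPresheaf x A₀).map (homOfLE hle).op a) = skyE x A₀ (hle hV) a := by
  rw [← CategoryTheory.comp_apply]
  congr 1
  have hm : (skyscraperPresheaf x A₀).map (homOfLE hle).op =
      eqToHom (by simp only [skyscraperPresheaf_obj, unop_op, if_pos hV, if_pos (hle hV)]) := by
    rw [skyscraperPresheaf_map, dif_pos hV]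
    rfl
  rw [skyE, skyE, hm, eqToHom_trans]

lemma sky_isZero {U : Opens ↥X} (h : x ∉ U) :
    IsZero ((skyscraperPresheaf x A₀).obj (op U)) := by
  simp only [skyscraperPresheaf_obj, unop_op, if_neg h]
  exact terminalIsTerminal.isZero

lemma skyE_inj {U : Opens ↥X} (h : x ∈ U) : Function.Injective (skyE x A₀ h) := by
  intro a b hab
  have := congrArg (skyE' x A₀ h) hab
  rwa [skyE'_skyE, skyE'_skyE] at this

end SkyAux

namespace CellData

variable {X : TopCat.{u}} (D : CellData ↥X)

lemma auxSuppFin (y : ↥X) (i : ℕ) (τ : D.P) :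
    (Function.support fun σ : D.KCells y i => D.eps σ.1 τ).Finite := by
  apply Set.Finite.subset
    ((D.eps_finite τ).preimage (Set.injOn_of_injective Subtype.val_injective))
  intro σ hσ
  exact hσ

lemma auxNonempty (hP3 : D.CondP3) (y : ↥X) : Nonempty (D.KCells y 0) := by
  by_contra hempty
  have hinj := (hP3 y (ULift.{u} ℤ)).1
  have h01 : (fun _ : D.KCells y 0 => (0 : ULift.{u} ℤ)) = (fun _ => (1 : ULift.{u} ℤ)) :=
    funext fun σ => (hempty ⟨σ⟩).elim
  have := congrArg ULift.down (hinj h01)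
  exact absurd this (by norm_num)

lemma auxRowSum (hP3 : D.CondP3) (y : ↥X) (σ' : D.KCells y 1) :
    ∑ᶠ σ : D.KCells y 0, D.eps σ.1 σ'.1 = 0 := by
  have hmem : (fun _ : D.KCells y 0 => (1 : ULift.{u} ℤ)) ∈
      {f : D.KCochain y (ULift.{u} ℤ) 0 | D.KDiffFun y (ULift.{u} ℤ) 0 f = 0} := by
    rw [← (hP3 y (ULift.{u} ℤ)).2]
    exact ⟨1, rfl⟩
  have h0 : D.KDiffFun y (ULift.{u} ℤ) 0 (fun _ => 1) σ' = 0 := congrFun hmem σ'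
  have h1 : (∑ᶠ σ : D.KCells y 0, D.eps σ.1 σ'.1) • (1 : ULift.{u} ℤ) = 0 := by
    rw [← auxFinsumZsmul (D.auxSuppFin y 0 σ'.1)]
    exact h0
  rw [zsmul_eq_mul, mul_one] at h1
  exact_mod_cast congrArg ULift.down h1

end CellData

/-- Lemma 3.6: for cell data satisfying (P1) and (P2), the following are
equivalent: (a) for every sheaf of abelian groups `F` on `X`, the map sending a global
section `s` to the family of its restrictions `(s|_{U_σ})_{|σ| = 0}` is injective with
image exactly the kernel of the degree-zero reduced Čech differential; (b) condition
(P3'): for every `x ∈ X` and every abelian group `A`, the map sending `a : A` to the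
constant family in `K⁰(Pₓ, A)` is injective with image exactly `ker d⁰`. -/
theorem stmt1 (X : TopCat.{u}) (D : CellData ↥X) :
    (∀ F : TopCat.Sheaf Ab.{u} X,
      Function.Injective
        (fun (s : ↥(F.val.obj (op (⊤ : Opens ↥X)))) =>
          (fun σ : D.Cells 0 => F.val.map (homOfLE le_top).op s : D.cochain F.val 0)) ∧
      Set.range
        (fun (s : ↥(F.val.obj (op (⊤ : Opens ↥X)))) =>
          (fun σ : D.Cells 0 => F.val.map (homOfLE le_top).op s : D.cochain F.val 0)) =
        {f : D.cochain F.val 0 | D.cechDiff F.val 0 f = 0}) ↔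
    D.CondP3 := by
  classical
  constructor
  · -- (a) → (P3')
    intro hFa x A instA
    have hxt : x ∈ (⊤ : Opens ↥X) := trivial
    have hφsky : ∀ (A₀ : Ab.{u}) {U V : Opens ↥X} (h : V ≤ U) (hV : x ∈ V)
        (a : ↥((skyscraperSheaf x A₀).val.obj (op U))),
        skyE x A₀ hV ((skyscraperSheaf x A₀).val.map (homOfLE h).op a) = skyE x A₀ (h hV) a :=
      fun A₀ {U V} h hV a => skyE_res x A₀ h hV a
    -- nonemptiness of the zero cells at x
    have hne : Nonempty (D.KCells x 0) := by
      by_contra hempty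
      set A₀ : Ab.{u} := AddCommGrpCat.of (ULift.{u} ℤ) with hA₀
      obtain ⟨hinj, -⟩ := hFa (skyscraperSheaf x A₀)
      have h01 : skyE' x A₀ hxt (ULift.up 0) = skyE' x A₀ hxt (ULift.up 1) := by
        apply hinj
        funext σ
        have hx : x ∉ D.U σ.1 := fun hmem => hempty ⟨⟨σ.1, hmem, σ.2⟩⟩
        haveI : Subsingleton ↑((skyscraperSheaf x A₀).val.obj (op (D.U σ.1))) :=
          auxSubsingleton (sky_isZero x A₀ hx)
        exact Subsingleton.elim _ _
      have h2 := congrArg (skyE x A₀ hxt) h01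
      rw [skyE_skyE', skyE_skyE'] at h2
      have := congrArg ULift.down h2
      exact absurd this (by norm_num)
    set A₀ : Ab.{u} := AddCommGrpCat.of A with hA₀
    obtain ⟨hinj, hker⟩ := hFa (skyscraperSheaf x A₀)
    constructor
    · intro a b hab
      exact congrFun hab hne.some
    · ext g
      constructor
      · rintro ⟨a, rfl⟩
        simp only [Set.mem_setOf_eq]
        funext σ'
        set s : ↥((skyscraperSheaf x A₀).val.obj (op ⊤)) := skyE' x A₀ hxt a with hs
        have hks : D.cechDiff (skyscraperSheaf x A₀).val 0
            (fun σ : D.Cells 0 => (skyscraperSheaf x A₀).val.map (homOfLE le_top).op s) = 0 := by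
          have hmem : (fun σ : D.Cells 0 =>
              (skyscraperSheaf x A₀).val.map (homOfLE le_top).op s) ∈
              {f : D.cochain (skyscraperSheaf x A₀).val 0 |
                D.cechDiff (skyscraperSheaf x A₀).val 0 f = 0} := by
            rw [← hker]
            exact ⟨s, rfl⟩
          exact hmem
        have hev := D.auxEvalCechDiff (skyscraperSheaf x A₀).val (B := ↥A₀) x
          (fun U h => (skyE x A₀ h).hom) (fun {U V} h hV a => hφsky A₀ h hV a)
          (fun σ : D.Cells 0 => (skyscraperSheaf x A₀).val.map (homOfLE le_top).op s) σ'
        have h0 : D.cechDiff (skyscraperSheaf x A₀).val 0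
            (fun σ : D.Cells 0 => (skyscraperSheaf x A₀).val.map (homOfLE le_top).op s)
            ⟨σ'.1, σ'.2.2⟩ = 0 := congrFun hks _
        have he2 : ∀ σ : D.KCells x 0,
            D.eps σ.1 σ'.1 • a =
            D.eps σ.1 σ'.1 • skyE x A₀ σ.2.1
              ((skyscraperSheaf x A₀).val.map (homOfLE le_top).op s) := by
          intro σ
          rw [hφsky A₀ le_top σ.2.1 s, hs, skyE_skyE']
        calc D.KDiffFun x A 0 (fun _ => a) σ'
            = ∑ᶠ σ : D.KCells x 0, D.eps σ.1 σ'.1 • skyE x A₀ σ.2.1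
              ((skyscraperSheaf x A₀).val.map (homOfLE le_top).op s) := finsum_congr he2
          _ = skyE x A₀ σ'.2.1 (D.cechDiff (skyscraperSheaf x A₀).val 0
              (fun σ : D.Cells 0 => (skyscraperSheaf x A₀).val.map (homOfLE le_top).op s)
              ⟨σ'.1, σ'.2.2⟩) := hev.symm
          _ = 0 := by rw [h0]; exact AddMonoidHom.map_zero _
      · intro hg
        have hg' : D.KDiffFun x A 0 g = 0 := hg
        set f : D.cochain (skyscraperSheaf x A₀).val 0 := fun σ =>
          if h : x ∈ D.U σ.1 then skyE' x A₀ h (g ⟨σ.1, h, σ.2⟩) else 0 with hf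
        have hfker : D.cechDiff (skyscraperSheaf x A₀).val 0 f = 0 := by
          funext σ'
          by_cases hx' : x ∈ D.U σ'.1
          · apply skyE_inj x A₀ hx'
            have hev := D.auxEvalCechDiff (skyscraperSheaf x A₀).val (B := ↥A₀) x
              (fun U h => (skyE x A₀ h).hom) (fun {U V} h hV a => hφsky A₀ h hV a) f
              ⟨σ'.1, hx', σ'.2⟩
            refine hev.trans ?_
            have he2 : ∀ σ : D.KCells x 0,
                D.eps σ.1 σ'.1 • skyE x A₀ σ.2.1 (f ⟨σ.1, σ.2.2⟩) =
                D.eps σ.1 σ'.1 • g σ := by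
              intro σ
              congr 1
              have hfσ : f ⟨σ.1, σ.2.2⟩ = skyE' x A₀ σ.2.1 (g σ) := by
                rw [hf]
                exact dif_pos σ.2.1
              rw [hfσ, skyE_skyE']
            refine (finsum_congr he2).trans ?_
            exact (congrFun hg' ⟨σ'.1, hx', σ'.2⟩).trans
              (AddMonoidHom.map_zero (skyE x A₀ hx').hom).symm
          · haveI : Subsingleton ↑((skyscraperSheaf x A₀).val.obj (op (D.U σ'.1))) :=
              auxSubsingleton (sky_isZero x A₀ hx')
            exact Subsingleton.elim _ _
        obtain ⟨s, hsres⟩ : f ∈ Set.range (fun (s : ↥((skyscraperSheaf x A₀).val.obj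
            (op (⊤ : Opens ↥X)))) =>
            (fun σ : D.Cells 0 => (skyscraperSheaf x A₀).val.map (homOfLE le_top).op s :
              D.cochain (skyscraperSheaf x A₀).val 0)) := by
          rw [hker]
          exact hfker
        refine ⟨skyE x A₀ hxt s, ?_⟩
        funext τ
        have h1 : f ⟨τ.1, τ.2.2⟩ = skyE' x A₀ τ.2.1 (g τ) := by
          rw [hf]
          exact dif_pos τ.2.1
        have h2 : (skyscraperSheaf x A₀).val.map (homOfLE le_top).op s = f ⟨τ.1, τ.2.2⟩ :=
          congrFun hsres ⟨τ.1, τ.2.2⟩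
        have h3 := congrArg (skyE x A₀ τ.2.1) (h2.trans h1)
        rw [hφsky A₀ le_top τ.2.1 s, skyE_skyE'] at h3
        exact h3
  · -- (P3') → (a)
    intro hP3 F
    have hcover : (⊤ : Opens ↥X) ≤ iSup (fun σ : D.Cells 0 => D.U σ.1) := by
      intro y _
      obtain ⟨σ⟩ := D.auxNonempty hP3 y
      exact Opens.mem_iSup.mpr ⟨⟨σ.1, σ.2.2⟩, σ.2.1⟩
    have hφ : ∀ (y : ↥X) {U V : Opens ↥X} (h : V ≤ U) (hV : y ∈ V)
        (a : ↥(F.val.obj (op U))),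
        F.presheaf.germ V y hV (F.val.map (homOfLE h).op a) = F.presheaf.germ U y (h hV) a :=
      fun y {U V} h hV a => F.presheaf.germ_res_apply (homOfLE h) y hV a
    constructor
    · intro s t hst
      apply TopCat.Sheaf.eq_of_locally_eq' F (fun σ : D.Cells 0 => D.U σ.1) ⊤
        (fun σ => homOfLE le_top) hcover
      intro σ
      exact congrFun hst σ
    · ext f
      constructor
      · rintro ⟨s, rfl⟩
        simp only [Set.mem_setOf_eq]
        funext σ'
        apply TopCat.Presheaf.section_ext F (D.U σ'.1)
        intro y hy
        simp only [Pi.zero_apply, map_zero]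
        have hev := D.auxEvalCechDiff F.val (B := ↥(F.presheaf.stalk y)) y
          (fun U h => (F.presheaf.germ U y h).hom) (fun {U V} h hV a => hφ y h hV a)
          (fun σ : D.Cells 0 => F.val.map (homOfLE le_top).op s) ⟨σ'.1, hy, σ'.2⟩
        refine hev.trans ?_
        have he2 : ∀ σ : D.KCells y 0,
            D.eps σ.1 σ'.1 • F.presheaf.germ (D.U σ.1) y σ.2.1
              (F.val.map (homOfLE le_top).op s) =
            D.eps σ.1 σ'.1 • F.presheaf.germ ⊤ y trivial s := by
          intro σ
          rw [hφ y le_top σ.2.1 s]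
        rw [finsum_congr he2, auxFinsumZsmul (D.auxSuppFin y 0 σ'.1),
          D.auxRowSum hP3 y ⟨σ'.1, hy, σ'.2⟩, zero_smul]
      · intro hf
        have hf' : D.cechDiff F.val 0 f = 0 := hf
        have hgker : ∀ (y : ↥X),
            D.KDiffFun y (↥(F.presheaf.stalk y)) 0
              (fun σ : D.KCells y 0 => F.presheaf.germ (D.U σ.1) y σ.2.1 (f ⟨σ.1, σ.2.2⟩)) = 0 :=
          fun y => by
            funext σ'
            have hev := D.auxEvalCechDiff F.val (B := ↥(F.presheaf.stalk y)) y
              (fun U h => (F.presheaf.germ U y h).hom) (fun {U V} h hV a => hφ y h hV a) f σ'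
            have h0 : D.cechDiff F.val 0 f ⟨σ'.1, σ'.2.2⟩ = 0 := congrFun hf' _
            rw [h0, map_zero] at hev
            exact hev.symm
        have hcompat : TopCat.Presheaf.IsCompatible F.val (fun σ : D.Cells 0 => D.U σ.1) f := by
          intro i j
          apply TopCat.Presheaf.section_ext F (D.U i.1 ⊓ D.U j.1)
          intro y hy
          obtain ⟨hyi, hyj⟩ := hy
          erw [F.presheaf.germ_res_apply, F.presheaf.germ_res_apply]
          obtain ⟨a, ha⟩ : (fun σ : D.KCells y 0 =>
              F.presheaf.germ (D.U σ.1) y σ.2.1 (f ⟨σ.1, σ.2.2⟩)) ∈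
              Set.range (fun (a : ↥(F.presheaf.stalk y)) (_ : D.KCells y 0) => a) := by
            rw [(hP3 y (↥(F.presheaf.stalk y))).2]
            exact hgker y
          have h1 := congrFun ha ⟨i.1, hyi, i.2⟩
          have h2 := congrFun ha ⟨j.1, hyj, j.2⟩
          exact h1.symm.trans h2
        obtain ⟨s, hs, -⟩ := TopCat.Sheaf.existsUnique_gluing' F (fun σ : D.Cells 0 => D.U σ.1) ⊤
          (fun σ => homOfLE le_top) hcover f hcompat
        exact ⟨s, funext hs⟩
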